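/- Let A ∈ ℝ^{m×n}, Q ∈ ℝ^{m×k} with orthonormal columns, and Ω ∈ ℝ^{k₂×m} such that ΩQ has full column rank (so (ΩQ)†(ΩQ) = I). Then ‖Q(ΩQ)†ΩA − A‖₂ ≤ (‖(ΩQ)†‖₂ · ‖Ω‖₂ + 1) · ‖A − QQ*A‖₂. -/
import Mathlib


/-- The operator (spectral) norm of a real matrix, viewed as a linear map
between Euclidean spaces. -/
noncomputable def opNorm {m n : ℕ} (A : Matrix (Fin m) (Fin n) ℝ) : ℝ :=
  ‖LinearMap.toContinuousLinearMap (Matrix.toEuclideanLin A)‖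

/-- The Moore–Penrose pseudoinverse of a full-column-rank matrix. -/
noncomputable def pinv {a b : ℕ} (M : Matrix (Fin a) (Fin b) ℝ) : Matrix (Fin b) (Fin a) ℝ :=
  (M.transpose * M)⁻¹ * M.transpose

open scoped Matrix.Norms.L2Operator

lemma opNorm_eq_l2 {m n : ℕ} (A : Matrix (Fin m) (Fin n) ℝ) : opNorm A = ‖A‖ := rfl

lemma opNorm_nonneg' {m n : ℕ} (A : Matrix (Fin m) (Fin n) ℝ) : 0 ≤ opNorm A := by
  rw [opNorm_eq_l2]; exact norm_nonneg _

lemma opNorm_mul_le' {m n l : ℕ} (A : Matrix (Fin m) (Fin n) ℝ) (B : Matrix (Fin n) (Fin l) ℝ) :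
    opNorm (A * B) ≤ opNorm A * opNorm B := by
  simp only [opNorm_eq_l2]; exact Matrix.l2_opNorm_mul A B

lemma opNorm_one_le {k : ℕ} : opNorm (1 : Matrix (Fin k) (Fin k) ℝ) ≤ 1 := by
  rw [opNorm_eq_l2, Matrix.cstar_norm_def, map_one]
  exact ContinuousLinearMap.norm_id_le

lemma opNorm_orthonormal_le_one {m k : ℕ} (Q : Matrix (Fin m) (Fin k) ℝ)
    (hQ : Q.transpose * Q = 1) : opNorm Q ≤ 1 := by
  have h : opNorm Q * opNorm Q ≤ 1 := by
    have : Q.conjTranspose = Q.transpose := by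
      ext i j; simp [Matrix.conjTranspose_apply]
    have h2 : opNorm Q * opNorm Q = opNorm (1 : Matrix (Fin k) (Fin k) ℝ) := by
      simp only [opNorm_eq_l2]
      rw [← Matrix.l2_opNorm_conjTranspose_mul_self Q, this, hQ]
    rw [h2]; exact opNorm_one_le
  nlinarith [opNorm_nonneg' Q]

theorem projection_pseudoinverse_bound {m n k k₂ : ℕ}
    (A : Matrix (Fin m) (Fin n) ℝ) (Q : Matrix (Fin m) (Fin k) ℝ)
    (hQ : Q.transpose * Q = 1) (W : Matrix (Fin k₂) (Fin m) ℝ)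
    (hfull : pinv (W * Q) * (W * Q) = 1) :
    opNorm (Q * pinv (W * Q) * W * A - A) ≤
      (opNorm (pinv (W * Q)) * opNorm W + 1) * opNorm (A - Q * Q.transpose * A) := by
  set P := pinv (W * Q) with hP
  set E := A - Q * Q.transpose * A with hE
  have h1 : Q * P * W * (Q * Q.transpose * A) = Q * Q.transpose * A := by
    calc Q * P * W * (Q * Q.transpose * A)
        = Q * (P * (W * Q)) * (Q.transpose * A) := by
          simp only [Matrix.mul_assoc]
      _ = Q * Q.transpose * A := by rw [hfull, Matrix.mul_one, Matrix.mul_assoc]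
  have key : Q * P * W * A - A = Q * P * W * E + (Q * Q.transpose * A - A) := by
    rw [hE, Matrix.mul_sub, h1]
    abel
  rw [key, opNorm_eq_l2]
  have tri : ‖Q * P * W * E + (Q * Q.transpose * A - A)‖ ≤
      ‖Q * P * W * E‖ + ‖Q * Q.transpose * A - A‖ := norm_add_le _ _
  have hneg : ‖Q * Q.transpose * A - A‖ = opNorm E := by
    rw [hE, opNorm_eq_l2, ← norm_neg]
    congr 1
    abel
  have hQ1 : opNorm Q ≤ 1 := opNorm_orthonormal_le_one Q hQ
  have step1 : ‖Q * P * W * E‖ ≤ opNorm P * opNorm W * opNorm E := by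
    calc ‖Q * P * W * E‖ = opNorm (Q * P * W * E) := rfl
      _ ≤ opNorm (Q * P * W) * opNorm E := opNorm_mul_le' _ _
      _ ≤ (opNorm (Q * P) * opNorm W) * opNorm E := by
          apply mul_le_mul_of_nonneg_right (opNorm_mul_le' _ _) (opNorm_nonneg' _)
      _ ≤ ((opNorm Q * opNorm P) * opNorm W) * opNorm E := by
          apply mul_le_mul_of_nonneg_right
            (mul_le_mul_of_nonneg_right (opNorm_mul_le' _ _) (opNorm_nonneg' _))
            (opNorm_nonneg' _)
      _ ≤ opNorm P * opNorm W * opNorm E := by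
          have hnn : 0 ≤ opNorm P * opNorm W * opNorm E :=
            mul_nonneg (mul_nonneg (opNorm_nonneg' P) (opNorm_nonneg' W)) (opNorm_nonneg' E)
          have := mul_le_mul_of_nonneg_right hQ1 hnn
          linarith [this, (by ring : opNorm Q * opNorm P * opNorm W * opNorm E
            = opNorm Q * (opNorm P * opNorm W * opNorm E))]
  calc ‖Q * P * W * E + (Q * Q.transpose * A - A)‖
      ≤ ‖Q * P * W * E‖ + ‖Q * Q.transpose * A - A‖ := tri
    _ ≤ opNorm P * opNorm W * opNorm E + opNorm E := by
        rw [hneg]; linarith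
    _ = (opNorm P * opNorm W + 1) * opNorm E := by ring
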